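/- Let S be a set and f : Set S → Set S be monotone. Then the greatest fixpoint of f equals the union of all subsets X ⊆ S that are supported for f, i.e. νf = ⋃{X ⊆ S | ∃ ≺, (X, ≺) is a support ordering for f}. -/
import Mathlib


/-- `(X, r)` is a support ordering for `f`. -/
def IsSupportOrdering {S : Type*} (f : Set S → Set S) (X : Set S) (r : S → S → Prop) : Prop :=
  ∀ x ∈ X, x ∈ f {x' ∈ X | r x' x}

theorem gfp_eq_union_supported {S : Type*} (f : Set S → Set S) (hf : Monotone f) :
    OrderHom.gfp ⟨f, hf⟩ =
      sSup {X : Set S |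
        ∃ r : S → S → Prop, (∀ x y, r x y → x ∈ X ∧ y ∈ X) ∧ IsSupportOrdering f X r} := by
  set g : Set S →o Set S := ⟨f, hf⟩
  apply le_antisymm
  · apply le_sSup
    refine ⟨fun x y => x ∈ g.gfp ∧ y ∈ g.gfp, fun x y h => h, fun x hx => ?_⟩
    have hfix : f g.gfp = g.gfp := g.isFixedPt_gfp
    have : {x' ∈ g.gfp | x' ∈ g.gfp ∧ x ∈ g.gfp} = g.gfp := by
      ext z; simp (config := {contextual := true}) [hx]
    rw [this, hfix]
    exact hx
  · apply sSup_le
    rintro X ⟨r, -, hsupp⟩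
    apply OrderHom.le_gfp
    intro x hx
    exact hf (fun z hz => hz.1) (hsupp x hx)
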